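/- Naturality of hyper normalisation in the index parameter: let h : Fin n → D(Fin m), and for any type X write h·X : Fin n × X → D(Fin m × X) for the map (i,x) ↦ Σ_j h(i)(j)·η(j,x). Then for every ω ∈ D(Fin n × A): D(id × μ)( N( (h·D(A))_*( N(ω) ) ) ) = N( (h·A)_*(ω) ), where the inner N is the hyper normalisation D(Fin n × A) → D(Fin n × D(A)), the outer N is the hyper normalisation D(Fin m × D(A)) → D(Fin m × D(D(A))), and id × μ : Fin m × D(D(A)) → Fin m × D(A). -/

import Mathlib

open scoped ENNReal

noncomputable section

namespace HyperNorm

variable {A B : Type*} {n m : ℕ}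

/-- `ω[i] = Σ_a ω(i,a)`. -/
def fmass (ω : PMF (Fin n × A)) (i : Fin n) : ℝ≥0∞ := ∑' a, ω (i, a)

lemma tsum_fmass (ω : PMF (Fin n × A)) : ∑' i, fmass ω i = 1 := by
  simp only [fmass]
  rw [← ENNReal.tsum_prod']
  exact ω.tsum_coe

lemma fmass_ne_top (ω : PMF (Fin n × A)) (i : Fin n) : fmass ω i ≠ ⊤ := by
  apply ne_top_of_le_ne_top ENNReal.one_ne_top
  rw [← tsum_fmass ω]
  exact ENNReal.le_tsum i

/-- The first marginal `i ↦ ω[i]` as a distribution. -/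
def fstM (ω : PMF (Fin n × A)) : PMF (Fin n) :=
  ⟨fun i => fmass ω i, ENNReal.summable.hasSum_iff.mpr (tsum_fmass ω)⟩

/-- The normalised `i`-th component `ω_i(a) = ω(i,a)/ω[i]` (junk value if `ω[i] = 0`,
which never contributes to `hnorm` below since it is weighted by `ω[i] = 0`). -/
def ncond (ω : PMF (Fin n × A)) (i : Fin n) : PMF A :=
  if h : fmass ω i ≠ 0 then
    ⟨fun a => ω (i, a) / fmass ω i,
      ENNReal.summable.hasSum_iff.mpr (by
        simp only [div_eq_mul_inv]
        rw [ENNReal.tsum_mul_right, ← div_eq_mul_inv]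
        exact ENNReal.div_self h (fmass_ne_top ω i))⟩
  else PMF.pure (ω.support_nonempty.some.2)

/-- Hyper normalisation `N(ω) = Σ_{i with ω[i] ≠ 0} ω[i]·η(i, ω_i)`. -/
def hnorm (ω : PMF (Fin n × A)) : PMF (Fin n × PMF A) :=
  (fstM ω).bind fun i => PMF.pure (i, ncond ω i)

/-- Graph map `gr(f)(x)(y,x') = f(x)(y) if x' = x, else 0`. -/
def gr {X Y : Type*} (f : X → PMF Y) : X → PMF (Y × X) :=
  fun x => (f x).map fun y => (y, x)

open Classical in
lemma fstM_apply (ω : PMF (Fin n × A)) (i : Fin n) : fstM ω i = fmass ω i := rfl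

lemma ncond_apply (ω : PMF (Fin n × A)) (i : Fin n) (hi : fmass ω i ≠ 0) (a : A) :
    ncond ω i a = ω (i, a) / fmass ω i := by
  exact (congrArg (fun p : PMF A => p a) (dif_pos hi : ncond ω i = _)).trans rfl

lemma fmass_mul_ncond (ω : PMF (Fin n × A)) (i : Fin n) (a : A) :
    fmass ω i * ncond ω i a = ω (i, a) := by
  by_cases hi : fmass ω i = 0
  · rw [hi, zero_mul]
    have : ω (i, a) ≤ fmass ω i := ENNReal.le_tsum a
    rw [hi] at this
    exact (le_zero_iff.mp this).symm
  · rw [ncond_apply ω i hi, ENNReal.mul_div_cancel hi (fmass_ne_top ω i)]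

open Classical in
lemma hnorm_apply (ω : PMF (Fin n × A)) (i : Fin n) (φ : PMF A) :
    hnorm ω (i, φ) = if φ = ncond ω i then fmass ω i else 0 := by
  rw [hnorm, PMF.bind_apply]
  rw [tsum_eq_single i (fun b hb => by simp [PMF.pure_apply, Prod.ext_iff, Ne.symm hb])]
  by_cases hφ : φ = ncond ω i <;> simp [PMF.pure_apply, Prod.ext_iff, hφ, fstM_apply]

lemma fmass_hnorm (ω : PMF (Fin n × A)) (i : Fin n) : fmass (hnorm ω) i = fmass ω i := by
  rw [fmass, tsum_eq_single (ncond ω i) (fun φ hφ => by rw [hnorm_apply, if_neg hφ]),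
    hnorm_apply, if_pos rfl]

open Classical in
lemma bindmap_apply {X : Type*} (h : Fin n → PMF (Fin m)) (σ : PMF (Fin n × X))
    (j : Fin m) (x : X) :
    (σ.bind fun p => (h p.1).map fun k => (k, p.2)) (j, x) = ∑' i, σ (i, x) * h i j := by
  rw [PMF.bind_apply, ENNReal.tsum_prod']
  refine tsum_congr fun i => ?_
  have hmap : ∀ y : X, ((h i).map fun k => (k, y)) (j, x) = if x = y then h i j else 0 := by
    intro y
    rw [PMF.map_apply]
    by_cases hxy : x = y
    · subst hxy
      rw [if_pos rfl]
      rw [tsum_eq_single j (fun k hk => by simp [Prod.ext_iff, Ne.symm hk])]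
      simp
    · rw [if_neg hxy]
      refine ENNReal.tsum_eq_zero.mpr fun k => ?_
      simp [Prod.ext_iff, hxy]
  simp only [hmap, mul_ite, mul_zero]
  rw [tsum_eq_single x (fun y hy => if_neg (Ne.symm hy))]
  simp

lemma fmass_bindmap {X : Type*} (h : Fin n → PMF (Fin m)) (σ : PMF (Fin n × X)) (j : Fin m) :
    fmass (σ.bind fun p => (h p.1).map fun k => (k, p.2)) j = ∑' i, fmass σ i * h i j := by
  simp only [fmass, bindmap_apply]
  rw [ENNReal.tsum_comm]
  exact tsum_congr fun i => ENNReal.tsum_mul_right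

lemma bind_congr_support {α β : Type*} (p : PMF α) (f g : α → PMF β)
    (hfg : ∀ a, p a ≠ 0 → f a = g a) : p.bind f = p.bind g := by
  refine PMF.ext fun b => ?_
  rw [PMF.bind_apply, PMF.bind_apply]
  refine tsum_congr fun a => ?_
  by_cases ha : p a = 0
  · rw [ha, zero_mul, zero_mul]
  · rw [hfg a ha]

lemma key (h : Fin n → PMF (Fin m)) (ω : PMF (Fin n × A)) (j : Fin m)
    (hj : fmass (ω.bind fun p => (h p.1).map fun k => (k, p.2)) j ≠ 0) :
    (ncond ((hnorm ω).bind fun p => (h p.1).map fun k => (k, p.2)) j).bind id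
      = ncond (ω.bind fun p => (h p.1).map fun k => (k, p.2)) j := by
  set τ := ω.bind fun p => (h p.1).map fun k => (k, p.2) with hτ
  set ω' := (hnorm ω).bind fun p : Fin n × PMF A => (h p.1).map fun k => (k, p.2) with hω'
  have hTT : fmass ω' j = fmass τ j := by
    rw [hω', hτ, fmass_bindmap, fmass_bindmap]
    exact tsum_congr fun i => by rw [fmass_hnorm]
  have hj' : fmass ω' j ≠ 0 := hTT ▸ hj
  refine PMF.ext fun a => ?_
  rw [PMF.bind_apply, ncond_apply _ j hj]
  have hS : ∑' (φ : PMF A), ω' (j, φ) * id φ a = τ (j, a) := by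
    calc ∑' (φ : PMF A), ω' (j, φ) * id φ a
        = ∑' (φ : PMF A), (∑' i, hnorm ω (i, φ) * h i j) * φ a := by
          refine tsum_congr fun φ => ?_
          rw [hω', bindmap_apply]
          rfl
      _ = ∑' (φ : PMF A) (i : Fin n), hnorm ω (i, φ) * h i j * φ a := by
          refine tsum_congr fun φ => ?_
          exact ENNReal.tsum_mul_right.symm
      _ = ∑' (i : Fin n) (φ : PMF A), hnorm ω (i, φ) * h i j * φ a := ENNReal.tsum_comm
      _ = ∑' (i : Fin n), ω (i, a) * h i j := by
          refine tsum_congr fun i => ?_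
          simp only [hnorm_apply, ite_mul, zero_mul]
          rw [tsum_eq_single (ncond ω i) (fun φ hφ => if_neg hφ), if_pos rfl]
          rw [mul_right_comm, fmass_mul_ncond]
      _ = τ (j, a) := by rw [hτ, bindmap_apply]
  rw [← hTT]
  rw [div_eq_mul_inv, ← hS, ← ENNReal.tsum_mul_right]
  refine tsum_congr fun φ => ?_
  rw [ncond_apply _ j hj', div_eq_mul_inv, mul_right_comm]


/-- naturality of `N` in the index parameter: for `h : Fin n → D(Fin m)`,
`D(id × μ)(N((h·D(A))_*(N(ω)))) = N((h·A)_*(ω))`. -/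
theorem hnorm_index_natural (h : Fin n → PMF (Fin m)) (ω : PMF (Fin n × A)) :
    (hnorm ((hnorm ω).bind fun p : Fin n × PMF A => (h p.1).map fun j => (j, p.2))).map
        (fun q : Fin m × PMF (PMF A) => (q.1, q.2.bind id)) =
      hnorm (ω.bind fun p : Fin n × A => (h p.1).map fun j => (j, p.2)) := by
  classical
  set τ := ω.bind fun p : Fin n × A => (h p.1).map fun j => (j, p.2) with hτ
  set ω' := (hnorm ω).bind fun p : Fin n × PMF A => (h p.1).map fun j => (j, p.2) with hω'
  have hfst : fstM ω' = fstM τ := PMF.ext fun j => by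
    rw [fstM_apply, fstM_apply, hω', hτ, fmass_bindmap, fmass_bindmap]
    exact tsum_congr fun i => by rw [fmass_hnorm]
  rw [hnorm, hnorm, PMF.map_bind]
  simp only [PMF.pure_map]
  rw [hfst]
  exact bind_congr_support _ _ _ fun j hj => by rw [key h ω j hj]

end HyperNorm
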